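/- Let g : [0,1] → [0,1] be defined by g(x) = 2x for x < 1/2 and g(x) = 2(1-x) for x ≥ 1/2 (the tent map). Then for every positive integer r and every x ∈ [0,1], the piecewise linear interpolation f_r of x^2 with breakpoints k/2^r satisfies f_r(x) = x - Σ_{i=1}^{r} 2^{-2i} g^{∘i}(x), where g^{∘i} denotes the i-th iterate of g. -/

import Mathlib

open Set

private lemma gle (g : ℝ → ℝ)
    (hg : ∀ x : ℝ, g x = if x < 1 / 2 then 2 * x else 2 * (1 - x))
    {x : ℝ} (hx : x ≤ 1/2) : g x = 2 * x := by
  by_cases h : x < 1/2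
  · rw [hg, if_pos h]
  · have hx2 : x = 1/2 := le_antisymm hx (not_lt.mp h)
    rw [hg, if_neg h, hx2]; norm_num

private lemma gge (g : ℝ → ℝ)
    (hg : ∀ x : ℝ, g x = if x < 1 / 2 then 2 * x else 2 * (1 - x))
    {x : ℝ} (hx : 1/2 ≤ x) : g x = 2 * (1 - x) := by
  rw [hg, if_neg (not_lt.mpr hx)]

private lemma gstep (g : ℝ → ℝ)
    (hg : ∀ x : ℝ, g x = if x < 1 / 2 then 2 * x else 2 * (1 - x))
    (x : ℝ) : x - x^2 = g x / 4 + (g x - (g x)^2) / 4 := by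
  by_cases h : x < 1/2
  · rw [hg, if_pos h]; ring
  · rw [hg, if_neg h]; ring

private lemma tele (g : ℝ → ℝ)
    (hg : ∀ x : ℝ, g x = if x < 1 / 2 then 2 * x else 2 * (1 - x)) :
    ∀ (r : ℕ) (x : ℝ), x - x^2 =
      (∑ i ∈ Finset.Icc 1 r, ((4:ℝ)⁻¹)^i * g^[i] x)
        + ((4:ℝ)⁻¹)^r * (g^[r] x - (g^[r] x)^2) := by
  intro r
  induction r with
  | zero => intro x; simp
  | succ r ih =>
      intro x
      rw [Finset.sum_Icc_succ_top (Nat.le_add_left 1 r)]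
      rw [Function.iterate_succ_apply']
      have h1 := gstep g hg (g^[r] x)
      have h2 := ih x
      linear_combination h2 + ((4:ℝ)⁻¹)^r * h1

private lemma iter_affine (g : ℝ → ℝ)
    (hg : ∀ x : ℝ, g x = if x < 1 / 2 then 2 * x else 2 * (1 - x)) :
    ∀ (r : ℕ) (k : ℕ), k < 2^r →
      (∀ x ∈ Icc ((k:ℝ)/2^r) (((k:ℝ)+1)/2^r), g^[r] x = 2^r * x - k) ∨
      (∀ x ∈ Icc ((k:ℝ)/2^r) (((k:ℝ)+1)/2^r), g^[r] x = ((k:ℝ)+1) - 2^r * x) := by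
  intro r
  induction r with
  | zero =>
      intro k hk
      interval_cases k
      left; intro x _; simp
  | succ r ih =>
      intro k hk
      have h2r : (0:ℝ) < 2^r := by positivity
      have hpow : (2:ℝ)^(r+1) = 2 * 2^r := by rw [pow_succ]; ring
      by_cases hks : k < 2^r
      · -- left half: x ≤ 1/2
        have hk1 : ((k:ℝ) + 1) ≤ 2^r := by
          have : (k + 1 : ℕ) ≤ 2^r := hks
          calc ((k:ℝ) + 1) = ((k+1 : ℕ) : ℝ) := by push_cast; ring
            _ ≤ ((2^r : ℕ) : ℝ) := by exact_mod_cast this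
            _ = 2^r := by push_cast; ring
        have key : ∀ x ∈ Icc ((k:ℝ)/2^(r+1)) (((k:ℝ)+1)/2^(r+1)),
            g x = 2 * x ∧ (2 * x) ∈ Icc ((k:ℝ)/2^r) (((k:ℝ)+1)/2^r) := by
          intro x hx
          obtain ⟨hx1, hx2⟩ := hx
          rw [div_le_iff₀ (by positivity)] at hx1
          rw [le_div_iff₀ (by positivity)] at hx2
          have hxh : x ≤ 1/2 := by
            nlinarith
          refine ⟨gle g hg hxh, ?_, ?_⟩
          · rw [div_le_iff₀ h2r]; nlinarith
          · rw [le_div_iff₀ h2r]; nlinarith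
        rcases ih k hks with h | h
        · left; intro x hx
          rw [Function.iterate_succ_apply, (key x hx).1, h _ (key x hx).2]
          rw [hpow]; ring
        · right; intro x hx
          rw [Function.iterate_succ_apply, (key x hx).1, h _ (key x hx).2]
          rw [hpow]; ring
      · -- right half: x ≥ 1/2
        push_neg at hks
        set k' : ℕ := 2^(r+1) - 1 - k with hk'def
        have hksum : k' + k + 1 = 2^(r+1) := by
          have h1 : (2:ℕ)^(r+1) = 2 * 2^r := by rw [pow_succ]; ring
          omega
        have hk's : k' < 2^r := by
          have h1 : (2:ℕ)^(r+1) = 2 * 2^r := by rw [pow_succ]; ring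
          omega
        have hksumR : (k':ℝ) + k + 1 = 2^(r+1) := by
          have := hksum
          calc (k':ℝ) + k + 1 = ((k' + k + 1 : ℕ) : ℝ) := by push_cast; ring
            _ = ((2^(r+1) : ℕ) : ℝ) := by rw [this]
            _ = 2^(r+1) := by push_cast; ring
        have hk2r : (2:ℝ)^r ≤ (k:ℝ) := by
          have : (2:ℕ)^r ≤ k := hks
          calc (2:ℝ)^r = ((2^r : ℕ) : ℝ) := by push_cast; ring
            _ ≤ (k:ℝ) := by exact_mod_cast this
        have key : ∀ x ∈ Icc ((k:ℝ)/2^(r+1)) (((k:ℝ)+1)/2^(r+1)),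
            g x = 2 * (1 - x) ∧ (2 * (1 - x)) ∈ Icc ((k':ℝ)/2^r) (((k':ℝ)+1)/2^r) := by
          intro x hx
          obtain ⟨hx1, hx2⟩ := hx
          rw [div_le_iff₀ (by positivity)] at hx1
          rw [le_div_iff₀ (by positivity)] at hx2
          have hxh : 1/2 ≤ x := by nlinarith
          refine ⟨gge g hg hxh, ?_, ?_⟩
          · rw [div_le_iff₀ h2r]; nlinarith
          · rw [le_div_iff₀ h2r]; nlinarith
        rcases ih k' hk's with h | h
        · right; intro x hx
          rw [Function.iterate_succ_apply, (key x hx).1, h _ (key x hx).2]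
          rw [hpow] at hksumR ⊢; linarith
        · left; intro x hx
          rw [Function.iterate_succ_apply, (key x hx).1, h _ (key x hx).2]
          rw [hpow] at hksumR ⊢; linarith

/-- The piecewise linear interpolation of x² equals x - Σ_{i=1}^r 2^{-2i} g^{∘i}(x) with g the tent map. -/
theorem stmt1 (r : ℕ) (hr : 0 < r) (fr : ℝ → ℝ)
    (hinterp : ∀ k : ℕ, k ≤ 2 ^ r → fr ((k : ℝ) / 2 ^ r) = ((k : ℝ) / 2 ^ r) ^ 2)
    (hcont : ContinuousOn fr (Icc 0 1))
    (haffine : ∀ k : ℕ, k < 2 ^ r → ∃ a b : ℝ,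
      ∀ x ∈ Icc ((k : ℝ) / 2 ^ r) (((k : ℝ) + 1) / 2 ^ r), fr x = a * x + b)
    (g : ℝ → ℝ)
    (hg : ∀ x : ℝ, g x = if x < 1 / 2 then 2 * x else 2 * (1 - x)) :
    ∀ x ∈ Icc (0 : ℝ) 1,
      fr x = x - ∑ i ∈ Finset.Icc 1 r, (2 : ℝ) ^ (-(2 : ℤ) * i) * g^[i] x := by
  intro x hx
  have h2r : (0:ℝ) < 2^r := by positivity
  -- find the dyadic interval containing x
  obtain ⟨k, hk, hxI⟩ : ∃ k : ℕ, k < 2^r ∧ x ∈ Icc ((k:ℝ)/2^r) (((k:ℝ)+1)/2^r) := by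
    set n : ℕ := (⌊(2^r : ℝ) * x⌋).toNat with hn
    refine ⟨min n (2^r - 1), ?_, ?_, ?_⟩
    · have h1 : 1 ≤ 2^r := Nat.one_le_two_pow
      omega
    · rw [div_le_iff₀ h2r]
      have hnle : (n:ℝ) ≤ 2^r * x := by
        have h0 : (0:ℝ) ≤ 2^r * x := mul_nonneg (le_of_lt h2r) hx.1
        have hfl : (0:ℤ) ≤ ⌊(2^r : ℝ) * x⌋ := Int.floor_nonneg.mpr h0
        have : (n:ℝ) = ((⌊(2^r : ℝ) * x⌋ : ℤ) : ℝ) := by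
          rw [hn]; exact_mod_cast congrArg (Int.cast : ℤ → ℝ) (Int.toNat_of_nonneg hfl)
        rw [this]; exact Int.floor_le _
      have : ((min n (2^r - 1) : ℕ) : ℝ) ≤ (n:ℝ) := by
        exact_mod_cast Nat.min_le_left _ _
      linarith
    · rw [le_div_iff₀ h2r]
      by_cases hcase : n ≤ 2^r - 1
      · have hmin : min n (2^r - 1) = n := min_eq_left hcase
        rw [hmin]
        have hlt : (2^r : ℝ) * x < (⌊(2^r : ℝ) * x⌋ : ℝ) + 1 := Int.lt_floor_add_one _
        have h0 : (0:ℝ) ≤ 2^r * x := mul_nonneg (le_of_lt h2r) hx.1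
        have hfl : (0:ℤ) ≤ ⌊(2^r : ℝ) * x⌋ := Int.floor_nonneg.mpr h0
        have : (n:ℝ) = ((⌊(2^r : ℝ) * x⌋ : ℤ) : ℝ) := by
          rw [hn]; exact_mod_cast congrArg (Int.cast : ℤ → ℝ) (Int.toNat_of_nonneg hfl)
        rw [mul_comm]; nlinarith [this]
      · have hmin : min n (2^r - 1) = 2^r - 1 := min_eq_right (by omega)
        rw [hmin]
        have h1 : 1 ≤ 2^r := Nat.one_le_two_pow
        have hcast : ((2^r - 1 : ℕ) : ℝ) = 2^r - 1 := by
          rw [Nat.cast_sub h1]; push_cast; ring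
        rw [hcast]
        nlinarith [hx.2]
  -- fr is affine on the interval
  obtain ⟨a, b, hab⟩ := haffine k hk
  set p : ℝ := (k:ℝ)/2^r with hp
  set q : ℝ := ((k:ℝ)+1)/2^r with hq
  have hpq : p < q := by
    rw [hp, hq, div_lt_div_iff₀ h2r h2r]; nlinarith
  have hpI : p ∈ Icc p q := ⟨le_refl _, le_of_lt hpq⟩
  have hqI : q ∈ Icc p q := ⟨le_of_lt hpq, le_refl _⟩
  -- values at endpoints
  have hfp : fr p = p^2 := hinterp k (le_of_lt hk)
  have hfq : fr q = q^2 := by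
    have := hinterp (k+1) hk
    have hc : (((k+1:ℕ)):ℝ) = (k:ℝ) + 1 := by push_cast; ring
    rw [hc] at this
    exact this
  -- the target function is affine on the interval
  set A : ℝ := (2*(k:ℝ)+1)/2^r with hA
  set B : ℝ := -(((k:ℝ)^2+(k:ℝ))/(2^r*2^r)) with hB
  have h4 : ((4:ℝ)⁻¹)^r = (2^r*2^r)⁻¹ := by
    rw [show (4:ℝ)⁻¹ = 2⁻¹*2⁻¹ by norm_num, mul_pow, inv_pow]
    exact (mul_inv _ _).symm
  have hG : ∀ y ∈ Icc p q,
      y^2 + ((4:ℝ)⁻¹)^r * (g^[r] y - (g^[r] y)^2) = A * y + B := by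
    intro y hy
    rcases iter_affine g hg r k hk with h | h
    · rw [h y hy, h4, hA, hB]; field_simp; ring
    · rw [h y hy, h4, hA, hB]; field_simp; ring
  -- iterate at endpoints takes value 0 or 1, so T vanishes; compute A*p+B = p² directly
  have hAp : A * p + B = p^2 := by
    rw [hA, hB, hp]; field_simp; ring
  have hAq : A * q + B = q^2 := by
    rw [hA, hB, hq]; field_simp; ring
  -- identify the two affine functions
  have e1 : a * p + b = A * p + B := by rw [hAp, ← hfp, hab p hpI]
  have e2 : a * q + b = A * q + B := by rw [hAq, ← hfq, hab q hqI]
  have haA : a = A := by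
    have h0 : (a - A) * (p - q) = 0 := by linear_combination e1 - e2
    rcases mul_eq_zero.mp h0 with h | h
    · linarith [sub_eq_zero.mp h]
    · exact absurd (sub_eq_zero.mp h) (ne_of_lt hpq)
  have hbB : b = B := by linear_combination e1 - p * haA
  -- rewrite sum terms
  have hsum : ∑ i ∈ Finset.Icc 1 r, (2 : ℝ) ^ (-(2 : ℤ) * i) * g^[i] x
      = ∑ i ∈ Finset.Icc 1 r, ((4:ℝ)⁻¹)^i * g^[i] x := by
    refine Finset.sum_congr rfl fun i _ => ?_
    congr 1
    rw [show (-(2:ℤ) * i) = -((2*i : ℕ):ℤ) by push_cast; ring, zpow_neg, zpow_natCast,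
      pow_mul, ← inv_pow]
    norm_num
  have htele := tele g hg r x
  calc fr x = a * x + b := hab x hxI
    _ = A * x + B := by rw [haA, hbB]
    _ = x^2 + ((4:ℝ)⁻¹)^r * (g^[r] x - (g^[r] x)^2) := (hG x hxI).symm
    _ = x - ∑ i ∈ Finset.Icc 1 r, (2 : ℝ) ^ (-(2 : ℤ) * i) * g^[i] x := by
        rw [hsum]; linear_combination -htele
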